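/- arXiv:math/0610281 — 3 statements merged into one kernel-verified Lean document; each statement's English description precedes it below -/
import Mathlib

section
/- For every positive integer n, ∑_{i=0}^{n} (-1)^i · C(n+i,i) · C(n,i) / (n+i)^2 = −(-1)^n · (n!)^2 / (n^2 · (2n)!), as an identity of rational numbers. -/
open Finset

lemma pascal_sum (n : ℕ) (f : ℕ → ℚ) :
    ∑ i ∈ range (n + 2), (-1 : ℚ) ^ i * (Nat.choose (n + 1) i) * f i
      = ∑ i ∈ range (n + 1), (-1 : ℚ) ^ i * (Nat.choose n i) * f i
        - ∑ i ∈ range (n + 1), (-1 : ℚ) ^ i * (Nat.choose n i) * f (i + 1) := by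
  have hA : ∑ i ∈ range (n + 1), (-1 : ℚ) ^ i * (Nat.choose n i) * f i
      = (∑ i ∈ range (n + 1), (-1 : ℚ) ^ (i+1) * (Nat.choose n (i+1)) * f (i+1))
        + f 0 := by
    rw [Finset.sum_range_succ' (fun i => (-1 : ℚ) ^ i * (Nat.choose n i) * f i) n]
    rw [Finset.sum_range_succ]
    simp [Nat.choose_succ_self]
  have key : ∑ k ∈ range (n+1), (-1:ℚ)^(k+1) * (Nat.choose (n+1) (k+1)) * f (k+1)
      = (∑ i ∈ range (n+1), (-1:ℚ)^(i+1) * (Nat.choose n (i+1)) * f (i+1))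
        - ∑ i ∈ range (n+1), (-1:ℚ)^i * (Nat.choose n i) * f (i+1) := by
    rw [← Finset.sum_sub_distrib]
    apply Finset.sum_congr rfl
    intro i _
    rw [Nat.choose_succ_succ]
    push_cast
    ring
  rw [Finset.sum_range_succ' (fun i => (-1 : ℚ) ^ i * (Nat.choose (n+1) i) * f i) (n+1)]
  rw [key, hA]
  simp only [Nat.choose_zero_right, Nat.cast_one, pow_zero]
  ring

lemma alt_choose_sum (n : ℕ) (hn : n ≠ 0) :
    ∑ i ∈ range (n + 1), (-1 : ℚ) ^ i * (Nat.choose n i) = 0 := by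
  have := Int.alternating_sum_range_choose_of_ne hn
  have h2 : ((∑ i ∈ range (n + 1), (-1 : ℤ) ^ i * (Nat.choose n i) : ℤ) : ℚ) = 0 := by
    rw [this]; norm_num
  rw [← h2]
  push_cast
  ring

lemma vanish (n : ℕ) : ∀ (m : ℕ) (y : ℚ), m < n →
    ∑ i ∈ range (n + 1), (-1 : ℚ) ^ i * (Nat.choose n i)
      * (∏ k ∈ range m, (y + i + (k + 1))) = 0 := by
  induction n with
  | zero => intro m y hm; exact absurd hm (Nat.not_lt_zero m)
  | succ n IH =>
    intro m y hm
    match m with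
    | 0 =>
      simp only [range_zero, prod_empty, mul_one]
      exact alt_choose_sum (n+1) (Nat.succ_ne_zero n)
    | (m'+1) =>
      rw [pascal_sum n (fun i => ∏ k ∈ range (m'+1), (y + i + (k + 1)))]
      have step : ∀ i : ℕ,
          (∏ k ∈ range (m'+1), (y + i + (k + 1)))
            - (∏ k ∈ range (m'+1), (y + (i+1 : ℕ) + (k + 1)))
          = -((m' : ℚ) + 1) * ∏ k ∈ range m', ((y+1) + i + (k + 1)) := by
        intro i
        have e1 : (∏ k ∈ range (m'+1), (y + i + (k + 1)))
            = (y + i + 1) * ∏ k ∈ range m', (y + i + (k + 2)) := by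
          rw [Finset.prod_range_succ']
          have : ∀ k ∈ range m', (y + (i:ℚ) + (((k+1 : ℕ):ℚ) + 1)) = (y + i + ((k:ℚ) + 2)) := by
            intro k _; push_cast; ring
          rw [Finset.prod_congr rfl this]
          push_cast
          ring
        have e2 : (∏ k ∈ range (m'+1), (y + (i+1 : ℕ) + (k + 1)))
            = (∏ k ∈ range m', (y + i + (k + 2))) * (y + i + (m' + 2)) := by
          rw [Finset.prod_range_succ]
          push_cast
          congr 1
          · apply Finset.prod_congr rfl; intro k _; push_cast; ring
          · ring
        have e3 : (∏ k ∈ range m', ((y+1) + i + (k + 1)))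
            = ∏ k ∈ range m', (y + i + (k + 2)) := by
          apply Finset.prod_congr rfl; intro k _; ring
        rw [e1, e2, e3]
        ring
      rw [← Finset.sum_sub_distrib]
      have : ∀ i ∈ range (n+1), (-1 : ℚ) ^ i * (Nat.choose n i)
            * (∏ k ∈ range (m'+1), (y + i + (k + 1)))
          - (-1 : ℚ) ^ i * (Nat.choose n i)
            * (∏ k ∈ range (m'+1), (y + (i+1 : ℕ) + (k + 1)))
          = -((m' : ℚ) + 1) * ((-1 : ℚ) ^ i * (Nat.choose n i)
            * ∏ k ∈ range m', ((y+1) + i + (k + 1))) := by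
        intro i _
        rw [← mul_sub, step i]
        ring
      rw [Finset.sum_congr rfl this, ← Finset.mul_sum,
        IH m' (y+1) (Nat.lt_of_succ_lt_succ hm), mul_zero]

lemma keyL (n : ℕ) : ∀ (m : ℕ), m ≤ n → ∀ (x y : ℚ), (∀ k : ℕ, k ≤ n → x + k ≠ 0) →
    ∑ i ∈ range (n+1), (-1:ℚ)^i * (Nat.choose n i) *
        ((∏ k ∈ range m, (y + i + (k+1))) / (x + i))
      = (Nat.factorial n) * (∏ k ∈ range m, (y + (k+1) - x)) /
          ∏ k ∈ range (n+1), (x + k) := by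
  induction n with
  | zero =>
    intro m hm x y hx
    interval_cases m
    simp
  | succ n IH =>
    have hlow : ∀ (m : ℕ), m ≤ n → ∀ (x y : ℚ), (∀ k : ℕ, k ≤ n+1 → x + k ≠ 0) →
        ∑ i ∈ range (n+2), (-1:ℚ)^i * (Nat.choose (n+1) i) *
            ((∏ k ∈ range m, (y + i + (k+1))) / (x + i))
          = (Nat.factorial (n+1)) * (∏ k ∈ range m, (y + (k+1) - x)) /
              ∏ k ∈ range (n+2), (x + k) := by
      intro m hm x y hx
      rw [pascal_sum n (fun i => (∏ k ∈ range m, (y + i + (k+1))) / (x + i))]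
      have hxn : ∀ k : ℕ, k ≤ n → x + k ≠ 0 := fun k hk => hx k (le_trans hk (Nat.le_succ n))
      have hx1 : ∀ k : ℕ, k ≤ n → (x+1) + k ≠ 0 := by
        intro k hk
        have := hx (k+1) (by omega)
        push_cast at this ⊢
        intro h; apply this; linarith
      have hB : ∑ i ∈ range (n+1), (-1:ℚ)^i * (Nat.choose n i) *
            ((∏ k ∈ range m, (y + ((i+1 : ℕ):ℚ) + (k+1))) / (x + ((i+1:ℕ):ℚ)))
          = ∑ i ∈ range (n+1), (-1:ℚ)^i * (Nat.choose n i) *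
            ((∏ k ∈ range m, ((y+1) + i + (k+1))) / ((x+1) + i)) := by
        apply Finset.sum_congr rfl
        intro i _
        congr 1
        congr 1
        · apply Finset.prod_congr rfl; intro k _; push_cast; ring
        · push_cast; ring
      rw [hB, IH m hm x y hxn, IH m hm (x+1) (y+1) hx1]
      have hP : (∏ k ∈ range m, ((y+1) + ((k:ℚ)+1) - (x+1))) = ∏ k ∈ range m, (y + ((k:ℚ)+1) - x) := by
        apply Finset.prod_congr rfl; intro k _; ring
      rw [hP]
      set P := ∏ k ∈ range m, (y + ((k:ℚ) + 1) - x) with hPdef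
      have hxn1 : x + ((n:ℚ)+1) ≠ 0 := by
        have := hx (n+1) le_rfl; push_cast at this
        intro h; apply this; linarith
      have hx0 : x ≠ 0 := by have := hx 0 (Nat.zero_le _); simpa using this
      have hE1 : (∏ k ∈ range (n+2), (x + (k:ℚ))) = (∏ k ∈ range (n+1), (x + (k:ℚ))) * (x + ((n:ℚ)+1)) := by
        rw [Finset.prod_range_succ]; push_cast; ring
      have hE2 : (∏ k ∈ range (n+2), (x + (k:ℚ))) = x * (∏ k ∈ range (n+1), ((x+1) + (k:ℚ))) := by
        rw [Finset.prod_range_succ']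
        have : ∀ k ∈ range (n+1), (x + (((k+1):ℕ):ℚ)) = ((x+1) + (k:ℚ)) := by
          intro k _; push_cast; ring
        rw [Finset.prod_congr rfl this]
        push_cast; ring
      have hA2 : (Nat.factorial n : ℚ) * P / (∏ k ∈ range (n+1), (x + (k:ℚ)))
          = (Nat.factorial n : ℚ) * P * (x + ((n:ℚ)+1)) / (∏ k ∈ range (n+2), (x + (k:ℚ))) := by
        rw [hE1, mul_div_mul_right _ _ hxn1]
      have hB2 : (Nat.factorial n : ℚ) * P / (∏ k ∈ range (n+1), ((x+1) + (k:ℚ)))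
          = (Nat.factorial n : ℚ) * P * x / (∏ k ∈ range (n+2), (x + (k:ℚ))) := by
        rw [hE2, show (Nat.factorial n : ℚ) * P * x = x * ((Nat.factorial n : ℚ) * P) by ring,
          mul_div_mul_left _ _ hx0]
      rw [hA2, hB2, div_sub_div_same]
      congr 1
      rw [Nat.factorial_succ]
      push_cast
      ring
    intro m hm x y hx
    rcases Nat.lt_succ_iff_lt_or_eq.mp (Nat.lt_succ_of_le hm) with hlt | rfl
    · exact hlow m (Nat.lt_succ_iff.mp hlt) x y hx
    · -- m = n + 1
      have hsplit : ∀ i ∈ range (n+2),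
          (-1:ℚ)^i * (Nat.choose (n+1) i) *
            ((∏ k ∈ range (n+1), (y + i + (k+1))) / (x + i))
          = (-1:ℚ)^i * (Nat.choose (n+1) i) * (∏ k ∈ range n, (y + i + (k+1)))
            + (y + ((n:ℚ)+1) - x) * ((-1:ℚ)^i * (Nat.choose (n+1) i) *
              ((∏ k ∈ range n, (y + i + (k+1))) / (x + i))) := by
        intro i hi
        have hxi : x + (i:ℚ) ≠ 0 := hx i (Nat.lt_succ_iff.mp (mem_range.mp hi))
        rw [Finset.prod_range_succ]
        field_simp
        ring
      rw [Finset.sum_congr rfl hsplit, Finset.sum_add_distrib, ← Finset.mul_sum]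
      have hv := vanish (n+1) n y (Nat.lt_succ_self n)
      rw [show n+1+1 = n+2 from rfl] at hv
      rw [hv, hlow n le_rfl x y hx,
        Finset.prod_range_succ (fun k => y + ((k:ℚ)+1) - x) n, zero_add, ← mul_div_assoc]
      congr 1
      ring

lemma prod_asc (a : ℕ) : ∀ m : ℕ, ∏ k ∈ range m, ((a:ℚ) + k + 1)
    = (Nat.factorial (a+m) : ℚ) / (Nat.factorial a : ℚ) := by
  intro m
  induction m with
  | zero => rw [range_zero, Finset.prod_empty, Nat.add_zero, div_self (show ((Nat.factorial a:ℚ)) ≠ 0 by positivity)]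
  | succ m IH =>
    rw [Finset.prod_range_succ, IH, Nat.add_succ, Nat.factorial_succ]
    have h : (Nat.factorial a : ℚ) ≠ 0 := by positivity
    field_simp
    push_cast
    ring

lemma prod_desc : ∀ m : ℕ, ∏ k ∈ range m, ((k:ℚ) - (m:ℚ))
    = (-1:ℚ)^m * (Nat.factorial m : ℚ) := by
  intro m
  induction m with
  | zero => simp
  | succ m IH =>
    rw [Finset.prod_range_succ' (fun k => (k:ℚ) - ((m+1:ℕ):ℚ)) m]
    have : ∀ k ∈ range m, (((k+1:ℕ)):ℚ) - ((m+1:ℕ):ℚ) = (k:ℚ) - (m:ℚ) := by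
      intro k _; push_cast; ring
    rw [Finset.prod_congr rfl this, IH, Nat.factorial_succ]
    push_cast
    ring

theorem stmt_10 (n : ℕ) (hn : 0 < n) :
    ∑ i ∈ range (n + 1), (-1 : ℚ) ^ i * (Nat.choose (n + i) i) * (Nat.choose n i) /
        ((n : ℚ) + i) ^ 2 =
      -(-1 : ℚ) ^ n * (Nat.factorial n : ℚ) ^ 2 / ((n : ℚ) ^ 2 * (Nat.factorial (2 * n))) := by
  obtain ⟨p, rfl⟩ : ∃ p, n = p + 1 := ⟨n - 1, by omega⟩
  have hfp1 : ((Nat.factorial (p+1) : ℚ)) ≠ 0 := by positivity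
  have hterm : ∀ i ∈ range (p + 1 + 1),
      (-1 : ℚ) ^ i * (Nat.choose (p + 1 + i) i) * (Nat.choose (p+1) i) /
          (((p+1 : ℕ) : ℚ) + i) ^ 2
      = (1 / (Nat.factorial (p+1) : ℚ)) * ((-1:ℚ)^i * (Nat.choose (p+1) i) *
          ((∏ k ∈ range p, ((0:ℚ) + i + (k+1))) / ((((p:ℚ)+1)) + i))) := by
    intro i _
    have h1 : ∀ k ∈ range p, ((0:ℚ) + i + ((k:ℚ)+1)) = ((i:ℚ) + k + 1) := by
      intro k _; ring
    rw [Finset.prod_congr rfl h1, prod_asc i p]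
    have hc : ((Nat.choose (p+1+i) i) : ℚ)
        = (Nat.factorial (p+1+i) : ℚ) / ((Nat.factorial i : ℚ) * (Nat.factorial (p+1) : ℚ)) := by
      rw [Nat.cast_choose ℚ (by omega : i ≤ p+1+i), show p+1+i-i = p+1 from by omega]
    have hfs : (Nat.factorial (p+1+i) : ℚ) = ((p:ℚ) + i + 1) * (Nat.factorial (i+p) : ℚ) := by
      rw [show p+1+i = (i+p)+1 by omega, Nat.factorial_succ]
      push_cast
      ring
    rw [hc, hfs]
    have hfi : ((Nat.factorial i : ℚ)) ≠ 0 := by positivity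
    have hpi : ((p:ℚ) + 1 + i) ≠ 0 := by positivity
    have hpi2 : (((p+1:ℕ):ℚ) + i) ≠ 0 := by positivity
    field_simp
    push_cast
    ring
  rw [Finset.sum_congr rfl hterm, ← Finset.mul_sum,
    keyL (p+1) p (by omega) ((p:ℚ)+1) 0 (by intro k _; positivity)]
  have h2 : ∀ k ∈ range p, ((0:ℚ) + ((k:ℚ)+1) - ((p:ℚ)+1)) = ((k:ℚ) - (p:ℚ)) := by
    intro k _; ring
  have h3 : ∀ k ∈ range (p+1+1), ((((p:ℚ)+1)) + (k:ℚ)) = ((p:ℚ) + k + 1) := by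
    intro k _; ring
  rw [Finset.prod_congr rfl h2, Finset.prod_congr rfl h3, prod_desc p, prod_asc p (p+1+1)]
  have hfp : ((Nat.factorial p : ℚ)) ≠ 0 := by positivity
  have hf2p : ((Nat.factorial (p+(p+1+1)) : ℚ)) ≠ 0 := by positivity
  have hq : ((p:ℚ)+1) ≠ 0 := by positivity
  rw [show 2*(p+1) = p+(p+1+1) by ring]
  push_cast [Nat.factorial_succ]
  field_simp
  ring
end

section
/- For every natural number n, ∑_{k=0}^{n} (-1)^k · C(n+k,k) · C(n,k) · H_k = (-1)^n · 2 H_n, as an identity of rational numbers. -/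
open Finset

/-- Harmonic numbers `H_n = ∑_{j=1}^n 1/j`. -/
def H (n : ℕ) : ℚ := ∑ j ∈ Icc 1 n, (1 : ℚ) / j

lemma Hsucc (k : ℕ) : H (k+1) = H k + 1/(k+1) := by
  unfold H
  rw [Finset.sum_Icc_succ_top (by omega : 1 ≤ k+1)]
  push_cast; ring

noncomputable def G (n k : ℕ) : ℚ :=
  (-1 : ℚ) ^ k * (Nat.choose (n + k) k) * (Nat.choose (n+2) k) *
    (2*(2*(n:ℚ)+3)) / (((n:ℚ)+1)*((n:ℚ)+2)) *
    ( -(k:ℚ)^2 * H k + (k:ℚ)*((n:ℚ)+1+(k:ℚ))*((n:ℚ)+2-(k:ℚ)) / (((n:ℚ)+1)*((n:ℚ)+2)) )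

lemma e1 (n k : ℕ) : ((Nat.choose (n+1+k) k : ℕ) : ℚ)
    = (Nat.choose (n+k) k : ℚ) * ((n:ℚ)+1+(k:ℚ)) / ((n:ℚ)+1) := by
  have h := Nat.choose_mul_succ_eq (n+k) k
  have h2 : (n+k+1) - k = n+1 := by omega
  rw [h2] at h
  have hcast : ((Nat.choose (n+k) k) : ℚ) * ((n:ℚ)+(k:ℚ)+1) = (Nat.choose (n+k+1) k : ℚ) * ((n:ℚ)+1) := by
    exact_mod_cast congrArg (Nat.cast : ℕ → ℚ) h
  have hne : ((n:ℚ)+1) ≠ 0 := by positivity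
  have h3 : (n+1+k) = (n+k+1) := by omega
  rw [h3]
  field_simp
  linarith [hcast]

lemma e2 (n k : ℕ) : ((Nat.choose (n+2+k) k : ℕ) : ℚ)
    = (Nat.choose (n+k) k : ℚ) * ((n:ℚ)+1+(k:ℚ)) * ((n:ℚ)+2+(k:ℚ)) / (((n:ℚ)+1)*((n:ℚ)+2)) := by
  have h1 := e1 (n+1) k
  have h0 := e1 n k
  have ha : (n+1+1+k) = (n+2+k) := by omega
  have hb : (n+1+k) = (n+1+k) := rfl
  rw [ha] at h1
  rw [h1, h0]
  have hn1 : ((n:ℚ)+1) ≠ 0 := by positivity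
  have hn2 : ((n:ℚ)+2) ≠ 0 := by positivity
  push_cast
  field_simp
  ring

lemma e5 (n k : ℕ) : ((Nat.choose (n+k+1) (k+1) : ℕ) : ℚ)
    = (Nat.choose (n+k) k : ℚ) * ((n:ℚ)+(k:ℚ)+1) / ((k:ℚ)+1) := by
  have h := Nat.choose_succ_right_eq (n+k+1) k
  have h2 : (n+k+1) - k = n+1 := by omega
  rw [h2] at h
  have h1 := e1 n k
  have hcast : ((Nat.choose (n+k+1) (k+1)) : ℚ) * ((k:ℚ)+1) = (Nat.choose (n+k+1) k : ℚ) * ((n:ℚ)+1) := by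
    exact_mod_cast congrArg (Nat.cast : ℕ → ℚ) h
  have h3 : (n+1+k) = (n+k+1) := by omega
  rw [h3] at h1
  have hk : ((k:ℚ)+1) ≠ 0 := by positivity
  have hn : ((n:ℚ)+1) ≠ 0 := by positivity
  rw [h1] at hcast
  field_simp at hcast ⊢
  linarith [hcast]

lemma e3 (n k : ℕ) : ((Nat.choose (n+1) k : ℕ) : ℚ)
    = (Nat.choose (n+2) k : ℚ) * ((n:ℚ)+2-(k:ℚ)) / ((n:ℚ)+2) := by
  rcases le_or_gt k (n+2) with hk | hk
  · have h := Nat.choose_mul_succ_eq (n+1) k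
    have hcast : ((Nat.choose (n+1) k) : ℚ) * ((n:ℚ)+2) = (Nat.choose (n+2) k : ℚ) * ((n:ℚ)+2-(k:ℚ)) := by
      have := congrArg (Nat.cast : ℕ → ℚ) h
      push_cast [Nat.cast_sub hk] at this
      convert this using 2 <;> push_cast <;> ring
    have hne : ((n:ℚ)+2) ≠ 0 := by positivity
    field_simp
    linarith [hcast]
  · rw [Nat.choose_eq_zero_of_lt (by omega), Nat.choose_eq_zero_of_lt (by omega)]
    simp

lemma e4 (n k : ℕ) : ((Nat.choose n k : ℕ) : ℚ)
    = (Nat.choose (n+2) k : ℚ) * ((n:ℚ)+2-(k:ℚ)) * ((n:ℚ)+1-(k:ℚ)) / (((n:ℚ)+1)*((n:ℚ)+2)) := by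
  rcases le_or_gt k (n+1) with hk | hk
  · have h := Nat.choose_mul_succ_eq n k
    have hcast : ((Nat.choose n k) : ℚ) * ((n:ℚ)+1) = (Nat.choose (n+1) k : ℚ) * ((n:ℚ)+1-(k:ℚ)) := by
      have := congrArg (Nat.cast : ℕ → ℚ) h
      push_cast [Nat.cast_sub hk] at this
      convert this using 2 <;> push_cast <;> ring
    have h3 := e3 n k
    have hn1 : ((n:ℚ)+1) ≠ 0 := by positivity
    have hn2 : ((n:ℚ)+2) ≠ 0 := by positivity
    rw [h3] at hcast
    field_simp at hcast ⊢
    linarith [hcast]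
  · rw [Nat.choose_eq_zero_of_lt (by omega)]
    rcases le_or_gt k (n+2) with hk2 | hk2
    · have hkk : k = n+2 := by omega
      subst hkk
      push_cast
      simp
    · rw [Nat.choose_eq_zero_of_lt (by omega)]
      simp

lemma e6 (n k : ℕ) : ((Nat.choose (n+2) (k+1) : ℕ) : ℚ)
    = (Nat.choose (n+2) k : ℚ) * ((n:ℚ)+2-(k:ℚ)) / ((k:ℚ)+1) := by
  rcases le_or_gt k (n+2) with hk | hk
  · have h := Nat.choose_succ_right_eq (n+2) k
    have hcast : ((Nat.choose (n+2) (k+1)) : ℚ) * ((k:ℚ)+1) = (Nat.choose (n+2) k : ℚ) * ((n:ℚ)+2-(k:ℚ)) := by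
      have := congrArg (Nat.cast : ℕ → ℚ) h
      push_cast [Nat.cast_sub hk] at this
      convert this using 2 <;> push_cast <;> ring
    have hne : ((k:ℚ)+1) ≠ 0 := by positivity
    field_simp
    linarith [hcast]
  · rw [Nat.choose_eq_zero_of_lt (by omega), Nat.choose_eq_zero_of_lt (by omega)]
    simp

set_option maxHeartbeats 1000000 in
lemma alg (x y h nq kq e : ℚ) (hn1 : nq+1 ≠ 0) (hn2 : nq+2 ≠ 0) (hk1 : kq+1 ≠ 0) :
    (nq+2) * (e * (x*(nq+1+kq)*(nq+2+kq)/((nq+1)*(nq+2))) * y * h)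
    + (2*nq+3) * (e * (x*(nq+1+kq)/(nq+1)) * (y*(nq+2-kq)/(nq+2)) * h)
    + (nq+1) * (e * x * (y*(nq+2-kq)*(nq+1-kq)/((nq+1)*(nq+2))) * h)
    = (-e) * (x*(nq+kq+1)/(kq+1)) * (y*(nq+2-kq)/(kq+1)) * (2*(2*nq+3))/((nq+1)*(nq+2)) *
        ( -(kq+1)^2*(h+1/(kq+1)) + (kq+1)*(nq+1+(kq+1))*(nq+2-(kq+1))/((nq+1)*(nq+2)) )
      - e * x * y * (2*(2*nq+3))/((nq+1)*(nq+2)) *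
        ( -kq^2*h + kq*(nq+1+kq)*(nq+2-kq)/((nq+1)*(nq+2)) ) := by
  field_simp
  ring

set_option maxHeartbeats 2000000 in
set_option maxRecDepth 100000 in
lemma key (n k : ℕ) :
    ((n:ℚ)+2) * ((-1 : ℚ) ^ k * (Nat.choose (n+2+k) k) * (Nat.choose (n+2) k) * H k)
    + (2*(n:ℚ)+3) * ((-1 : ℚ) ^ k * (Nat.choose (n+1+k) k) * (Nat.choose (n+1) k) * H k)
    + ((n:ℚ)+1) * ((-1 : ℚ) ^ k * (Nat.choose (n+k) k) * (Nat.choose n k) * H k)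
    = G n (k+1) - G n k := by
  have hG1 : G n (k+1) = (-1 : ℚ) ^ (k+1) * (Nat.choose (n+k+1) (k+1)) * (Nat.choose (n+2) (k+1)) *
      (2*(2*(n:ℚ)+3)) / (((n:ℚ)+1)*((n:ℚ)+2)) *
      ( -((k:ℚ)+1)^2 * (H k + 1/((k:ℚ)+1)) + ((k:ℚ)+1)*((n:ℚ)+1+((k:ℚ)+1))*((n:ℚ)+2-((k:ℚ)+1)) / (((n:ℚ)+1)*((n:ℚ)+2)) ) := by
    unfold G
    rw [show n + (k+1) = n+k+1 from rfl, Hsucc k]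
    push_cast
    ring
  rw [hG1]
  unfold G
  rw [e2 n k, e1 n k, e3 n k, e4 n k, e5 n k, e6 n k, pow_succ]
  have hn1 : ((n:ℚ)+1) ≠ 0 := by positivity
  have hn2 : ((n:ℚ)+2) ≠ 0 := by positivity
  have hk1 : ((k:ℚ)+1) ≠ 0 := by positivity
  linear_combination alg (((n+k).choose k : ℕ):ℚ) (((n+2).choose k : ℕ):ℚ) (H k) (n:ℚ) (k:ℚ) ((-1)^k) hn1 hn2 hk1

noncomputable def S (m : ℕ) : ℚ :=
  ∑ k ∈ range (m+1), (-1 : ℚ) ^ k * (Nat.choose (m + k) k) * (Nat.choose m k) * H k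

lemma G0 (n : ℕ) : G n 0 = 0 := by
  unfold G H
  norm_num

lemma Gtop (n : ℕ) : G n (n+3) = 0 := by
  unfold G
  rw [Nat.choose_eq_zero_of_lt (by omega : n+2 < n+3)]
  norm_num

lemma Srec (n : ℕ) :
    ((n:ℚ)+2) * S (n+2) + (2*(n:ℚ)+3) * S (n+1) + ((n:ℚ)+1) * S n = 0 := by
  have hS1 : (∑ k ∈ range (n+2+1),
      (-1 : ℚ) ^ k * (Nat.choose (n+1+k) k) * (Nat.choose (n+1) k) * H k) = S (n+1) := by
    rw [Finset.sum_range_succ _ (n+2)]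
    rw [Nat.choose_eq_zero_of_lt (by omega : n+1 < n+2)]
    simp only [Nat.cast_zero, mul_zero, zero_mul, add_zero]
    rfl
  have hS0 : (∑ k ∈ range (n+2+1),
      (-1 : ℚ) ^ k * (Nat.choose (n+k) k) * (Nat.choose n k) * H k) = S n := by
    rw [Finset.sum_range_succ _ (n+2), Finset.sum_range_succ _ (n+1)]
    rw [Nat.choose_eq_zero_of_lt (by omega : n < n+2), Nat.choose_eq_zero_of_lt (by omega : n < n+1)]
    simp only [Nat.cast_zero, mul_zero, zero_mul, add_zero]
    rfl
  rw [← hS1, ← hS0]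
  unfold S
  rw [Finset.mul_sum, Finset.mul_sum, Finset.mul_sum, ← Finset.sum_add_distrib,
    ← Finset.sum_add_distrib]
  have : ∀ k ∈ range (n+2+1),
      ((n:ℚ)+2) * ((-1 : ℚ) ^ k * (Nat.choose (n+2+k) k) * (Nat.choose (n+2) k) * H k)
      + (2*(n:ℚ)+3) * ((-1 : ℚ) ^ k * (Nat.choose (n+1+k) k) * (Nat.choose (n+1) k) * H k)
      + ((n:ℚ)+1) * ((-1 : ℚ) ^ k * (Nat.choose (n+k) k) * (Nat.choose n k) * H k)
      = G n (k+1) - G n k := fun k _ => key n k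
  rw [Finset.sum_congr rfl this, Finset.sum_range_sub (G n) (n+2+1)]
  rw [show n+2+1 = n+3 from rfl, Gtop, G0]
  ring

lemma Sbase0 : S 0 = (-1 : ℚ)^0 * (2 * H 0) := by
  unfold S H
  simp

lemma Sbase1 : S 1 = (-1 : ℚ)^1 * (2 * H 1) := by
  unfold S H
  rw [Finset.sum_range_succ, Finset.sum_range_one]
  norm_num

lemma Smain (n : ℕ) : S n = (-1 : ℚ)^n * (2 * H n) := by
  induction n using Nat.twoStepInduction with
  | zero => exact Sbase0
  | one => exact Sbase1
  | more n ih0 ih1 =>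
    have hrec := Srec n
    rw [ih0, ih1] at hrec
    have hne : ((n:ℚ)+2) ≠ 0 := by positivity
    apply mul_left_cancel₀ hne
    have e1' : ((n:ℚ)+1) * H (n+1) = ((n:ℚ)+1) * H n + 1 := by
      rw [Hsucc n]
      have : ((n:ℚ)+1) ≠ 0 := by positivity
      field_simp
    have e2' : ((n:ℚ)+2) * H (n+2) = ((n:ℚ)+2) * H (n+1) + 1 := by
      rw [show n+2 = (n+1)+1 from rfl, Hsucc (n+1)]
      have : ((n:ℚ)+1+1) ≠ 0 := by positivity
      push_cast
      field_simp
      ring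
    rw [pow_succ] at hrec
    rw [pow_succ, pow_succ]
    linear_combination hrec + 2*(-1:ℚ)^n * e1' - 2*(-1:ℚ)^n * e2'

theorem stmt_11 (n : ℕ) :
    ∑ k ∈ range (n + 1), (-1 : ℚ) ^ k * (Nat.choose (n + k) k) * (Nat.choose n k) * H k =
      (-1 : ℚ) ^ n * (2 * H n) := by
  exact Smain n
end

section
/- For every natural number n, ∑_{k=0}^{n} (-1)^k · C(n+k,k) · C(n,k) · H_{n+k} = (-1)^n · 2 H_n, as an identity of rational numbers. -/
open Finset

section AuxDual

open TrivSqZeroExt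

/-- The dual numbers over `ℚ`. -/
abbrev A := DualNumber ℚ

/-- Falling-factorial-type product `x(x-1)⋯(x-k+1)`. -/
noncomputable def P (x : A) (k : ℕ) : A := ∏ i ∈ range k, (x - (i:A))

lemma P_succ (x : A) (k : ℕ) : P x (k+1) = P x k * (x - (k:A)) := prod_range_succ _ _

lemma P_zero (x : A) : P x 0 = 1 := rfl

lemma H_zero : H 0 = 0 := rfl

lemma H_succ (m : ℕ) : H (m+1) = H m + 1/(m+1) := by
  unfold H
  rw [Finset.sum_Icc_succ_top (Nat.le_add_left 1 m)]
  push_cast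
  ring

/-- Generalized Vandermonde identity (factorial-cleared form). -/
lemma vdm (x y : A) : ∀ m : ℕ,
    ∑ k ∈ range (m+1), (m.choose k : A) * (P x k * P y (m-k)) = P (x+y) m := by
  intro m
  induction m with
  | zero => simp [P_zero]
  | succ m ih =>
    have key : ∑ k ∈ range (m+1), (m.choose k : A) * (P x k * P y (m-k)) * ((x+y) - (m:A))
        = ∑ k ∈ range (m+1), ((m.choose k : A) * (P x (k+1) * P y (m-k))
            + (m.choose k : A) * (P x k * P y (m-k+1))) := by
      refine sum_congr rfl fun k hk => ?_
      have hk' : k ≤ m := Nat.lt_succ_iff.mp (mem_range.mp hk)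
      have hc : ((m-k : ℕ) : A) = (m:A) - (k:A) := by
        push_cast [Nat.cast_sub hk']; ring
      rw [P_succ, P_succ, hc]; ring
    have lhs1 : P (x+y) (m+1) = ∑ k ∈ range (m+1),
        ((m.choose k : A) * (P x (k+1) * P y (m-k))
          + (m.choose k : A) * (P x k * P y (m-k+1))) := by
      rw [P_succ, ← ih, Finset.sum_mul, key]
    rw [lhs1, sum_add_distrib]
    rw [Finset.sum_range_succ' (fun k => (((m+1).choose k : A)) * (P x k * P y (m+1-k)))]
    have e1 : ∀ k ∈ range (m+1), (((m+1).choose (k+1) : A)) * (P x (k+1) * P y (m+1-(k+1)))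
        = (m.choose k : A) * (P x (k+1) * P y (m-k))
          + (m.choose (k+1) : A) * (P x (k+1) * P y (m+1-(k+1))) := by
      intro k hk
      rw [Nat.choose_succ_succ]
      push_cast [Nat.succ_eq_add_one]
      ring
    rw [sum_congr rfl e1, sum_add_distrib]
    have e2 : ∑ k ∈ range (m+1), (m.choose (k+1) : A) * (P x (k+1) * P y (m+1-(k+1)))
          + ((m+1).choose 0 : A) * (P x 0 * P y (m+1-0))
        = ∑ k ∈ range (m+1), (m.choose k : A) * (P x k * P y (m-k+1)) := by
      have := (Finset.sum_range_succ' (fun k => ((m.choose k : A)) * (P x k * P y (m+1-k))) (m+1)).symm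
      simp only [Nat.choose_zero_right, Nat.cast_one, Nat.sub_zero] at this ⊢
      rw [this, Finset.sum_range_succ]
      simp only [Nat.choose_self, Nat.choose_succ_self, Nat.cast_zero, zero_mul, add_zero]
      refine sum_congr rfl fun k hk => ?_
      have hk' : k ≤ m := Nat.lt_succ_iff.mp (mem_range.mp hk)
      rw [Nat.succ_sub hk']
    rw [add_assoc, e2, add_comm]

lemma P_nat (n : ℕ) : ∀ j, j ≤ n → P (n:A) j = inl ((n.factorial / (n-j).factorial : ℚ)) := by
  intro j
  induction j with
  | zero =>
    intro _
    simp only [P, range_zero, prod_empty]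
    rw [Nat.sub_zero, div_self (by positivity), inl_one]
  | succ j ih =>
    intro hj
    have hj' : j ≤ n := Nat.le_of_succ_le hj
    rw [P_succ, ih hj']
    have hcast : ((n:A) - (j:A)) = inl (((n:ℚ) - j)) := by
      apply TrivSqZeroExt.ext <;> simp
    rw [hcast, inl_mul_inl]
    congr 1
    have key : ∀ (d : ℕ) (q : ℚ), q = (d:ℚ)+1 →
        (n.factorial:ℚ)/((d+1).factorial) * q = (n.factorial:ℚ)/d.factorial := by
      intro d q hq
      have hne : ((d.factorial : ℚ)) ≠ 0 := by positivity
      rw [Nat.factorial_succ, hq]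
      push_cast
      field_simp
    have h2 : (n - j) = (n - (j+1)) + 1 := by omega
    have h1 : ((n:ℚ) - j) = ((n - (j+1) : ℕ) : ℚ) + 1 := by
      have : ((n - (j+1) : ℕ) : ℚ) = (n:ℚ) - (j+1) := by
        push_cast [Nat.cast_sub hj]; ring
      rw [this]; ring
    rw [h2]
    exact key _ _ h1

lemma prodEps (c : ℕ) : ∀ k : ℕ,
    ∏ i ∈ range k, (inl ((c:ℚ)+i+1) + inr 1 : A)
      = inl (((c+k).factorial / c.factorial : ℚ))
        + inr (((c+k).factorial / c.factorial : ℚ) * (H (c+k) - H c)) := by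
  intro k
  induction k with
  | zero =>
    have : (c.factorial : ℚ) / c.factorial = 1 := by
      rw [div_self]; positivity
    simp [this]
  | succ k ih =>
    rw [prod_range_succ, ih]
    have hne : ((c+k:ℕ) : ℚ) + 1 ≠ 0 := by positivity
    have hfac : (((c+k+1).factorial : ℚ)) = ((c+k).factorial : ℚ) * ((c+k:ℕ)+1 : ℚ) := by
      push_cast [Nat.factorial_succ]; ring
    have hH : H (c+k+1) = H (c+k) + 1/((c+k:ℕ)+1 : ℚ) := by
      have := H_succ (c+k); push_cast at this ⊢; linarith
    apply TrivSqZeroExt.ext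
    · show (_ : ℚ) = _
      simp only [fst_mul, fst_add, fst_inl, fst_inr, add_zero, Nat.add_eq]
      rw [show c + (k+1) = (c+k)+1 from rfl, hfac]
      push_cast
      ring
    · show (_ : ℚ) = _
      simp only [snd_mul, snd_add, snd_inl, snd_inr, fst_add, fst_inl, fst_inr, add_zero,
        zero_add, smul_eq_mul, op_smul_eq_smul]
      rw [show c + (k+1) = (c+k)+1 from rfl, hfac, hH]
      have hc : (c.factorial : ℚ) ≠ 0 := by positivity
      field_simp
      push_cast
      ring

lemma P_x (n k : ℕ) : P (-(1:A) - (n:A) - inr 1) k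
    = (-1:A)^k * (inl (((n+k).factorial / n.factorial : ℚ))
        + inr (((n+k).factorial / n.factorial : ℚ) * (H (n+k) - H n))) := by
  rw [← prodEps]
  unfold P
  have : ∀ i ∈ range k, (-(1:A) - (n:A) - inr 1 - (i:A))
      = (-1 : A) * (inl ((n:ℚ)+i+1) + inr 1) := by
    intro i _
    apply TrivSqZeroExt.ext <;> simp <;> ring
  rw [prod_congr rfl this, prod_mul_distrib, prod_const, card_range]

lemma hpow (k : ℕ) : (-1:A)^k = inl ((-1:ℚ)^k) := by
  rw [show (-1:A) = inl (-1:ℚ) by simp, inl_pow]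

end AuxDual

open TrivSqZeroExt
theorem stmt_12 (n : ℕ) :
    ∑ k ∈ range (n + 1), (-1 : ℚ) ^ k * (Nat.choose (n + k) k) * (Nat.choose n k) * H (n + k) =
      (-1 : ℚ) ^ n * (2 * H n) := by
  classical
  set x : A := -(1:A) - (n:A) - inr 1 with hx
  set e : ℕ → ℚ := fun k => (-1:ℚ)^k * (n.choose k : ℚ) * ((n+k).factorial / n.factorial)
      * (n.factorial / k.factorial) with he
  set f : ℕ → ℚ := fun k => e k * (H (n+k) - H n) with hf
  have hterm : ∀ k ∈ range (n+1),
      ((n.choose k : A)) * (P x k * P (n:A) (n-k)) = inl (e k) + inr (f k) := by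
    intro k hk
    have hk' : k ≤ n := Nat.lt_succ_iff.mp (mem_range.mp hk)
    rw [P_x n k, P_nat n (n-k) (Nat.sub_le n k), Nat.sub_sub_self hk', hpow]
    apply TrivSqZeroExt.ext
    · simp [he, smul_eq_mul]; ring
    · simp [he, hf, smul_eq_mul, op_smul_eq_smul]; ring
  have hvdm := vdm x (n:A) n
  rw [sum_congr rfl hterm] at hvdm
  have hxy : x + (n:A) = -(1:A) - ((0:ℕ):A) - inr 1 := by
    rw [hx]; push_cast; ring
  rw [hxy, P_x 0 n, hpow] at hvdm
  simp only [Nat.zero_add, Nat.factorial_zero, Nat.cast_one, div_one, H_zero, sub_zero] at hvdm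
  have hfst : ∑ k ∈ range (n+1), e k = (-1:ℚ)^n * n.factorial := by
    have := congrArg TrivSqZeroExt.fst hvdm
    simpa [fst_sum, smul_eq_mul] using this
  have hsnd : ∑ k ∈ range (n+1), f k = (-1:ℚ)^n * n.factorial * H n := by
    have := congrArg TrivSqZeroExt.snd hvdm
    simpa [snd_sum, smul_eq_mul, op_smul_eq_smul, mul_assoc] using this
  have hen : ∀ k, k ≤ n → e k = (-1:ℚ)^k * ((n+k).choose k : ℚ) * (n.choose k : ℚ) * n.factorial := by
    intro k hk
    have hcc : (((n+k).choose k : ℚ)) * k.factorial * n.factorial = ((n+k).factorial : ℚ) := by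
      rw [show ((n+k).factorial : ℚ) = (((n+k).choose k * k.factorial * (n+k-k).factorial : ℕ) : ℚ) by
        rw [Nat.choose_mul_factorial_mul_factorial (Nat.le_add_left k n)]]
      push_cast [Nat.add_sub_cancel]
      ring
    have h1 : (n.factorial : ℚ) ≠ 0 := by positivity
    have h2 : (k.factorial : ℚ) ≠ 0 := by positivity
    rw [he]
    field_simp
    rw [← hcc]
    ring
  have hne : (n.factorial : ℚ) ≠ 0 := by positivity
  apply mul_left_cancel₀ hne
  have expand : (n.factorial : ℚ) * ∑ k ∈ range (n + 1),
      (-1 : ℚ) ^ k * ((n + k).choose k) * (n.choose k) * H (n + k)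
      = ∑ k ∈ range (n+1), (f k + H n * e k) := by
    rw [mul_sum]
    refine sum_congr rfl fun k hk => ?_
    have hk' : k ≤ n := Nat.lt_succ_iff.mp (mem_range.mp hk)
    have h3 : f k + H n * e k = e k * H (n+k) := by simp only [hf]; ring
    rw [h3, hen k hk']
    ring
  rw [expand, sum_add_distrib, hsnd, ← mul_sum, hfst]
  ring
end
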